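/- For every word w over the positive integers, every internal node of the plane tree 𝒯(w) has at least two children; conversely, for every plane tree T in which every internal node has at least two children, there exists a word w over the positive integers (which may be taken to be a packed word) with 𝒯(w) = T. -/

import Mathlib

/-- A plane tree: a node carrying an ordered (possibly empty) list of subtrees.
A leaf is `node []`. -/
inductive PlaneTree where
  | node : List PlaneTree → PlaneTree

/-- Auxiliary, fuel-indexed version of the map `w ↦ 𝒯(w)` from words to plane trees.
If `w` is nonempty with greatest letter `m`, writing `w = v₀ m v₁ m ⋯ m v_k`
(splitting at the occurrences of `m`), the tree is obtained by grafting the trees of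
`v₀, v₁, …, v_k` (in this order) on a common root; the empty word gives a leaf.
The fuel argument (any value `≥ w.length` gives the correct answer, since each factor
`vᵢ` is strictly shorter than `w`) makes the recursion structural. -/
def treeOfAux : ℕ → List ℕ → PlaneTree
  | 0, _ => .node []
  | _ + 1, [] => .node []
  | n + 1, a :: l =>
      .node (((a :: l).splitOn ((a :: l).foldr max 0)).map (treeOfAux n))

/-- The plane tree `𝒯(w)` associated to a word `w` over the natural numbers:
`𝒯(ε)` is a leaf, and if `w` is nonempty with greatest letter `m` occurring exactly `k`
times, writing `w = v₀ m v₁ m ⋯ m v_k`, then `𝒯(w) = node [𝒯(v₀), 𝒯(v₁), …, 𝒯(v_k)]`. -/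
def treeOf (w : List ℕ) : PlaneTree := treeOfAux w.length w

/-- The rank of the letter `x` in the word `w`: one plus the number of distinct letters
of `w` smaller than `x`. -/
def rank (w : List ℕ) (x : ℕ) : ℕ := ((w.filter (· < x)).dedup).length + 1

/-- The packed word of a word `w`: if the distinct letters occurring in `w` are
`b₁ < b₂ < … < b_k`, each occurrence of `b_j` is replaced by `j`. -/
def pack (w : List ℕ) : List ℕ := w.map (rank w)

/-- The predicate "every internal node has at least two children" on plane trees. -/
inductive EveryInternalNodeHasAtLeastTwoChildren : PlaneTree → Prop
  | node (ts : List PlaneTree) (hlen : ts = [] ∨ 2 ≤ ts.length)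
      (hts : ∀ t ∈ ts, EveryInternalNodeHasAtLeastTwoChildren t) :
      EveryInternalNodeHasAtLeastTwoChildren (.node ts)

namespace TreeOfProof

lemma le_foldr_max : ∀ {w : List ℕ} {x}, x ∈ w → x ≤ w.foldr max 0 := by
  intro w; induction w with
  | nil => simp
  | cons a l ih =>
    intro x hx
    rcases List.mem_cons.1 hx with rfl | hx
    · exact le_max_left _ _
    · exact le_trans (ih hx) (le_max_right _ _)

lemma foldr_max_mem : ∀ {w : List ℕ}, w ≠ [] → w.foldr max 0 ∈ w := by
  intro w; induction w with
  | nil => simp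
  | cons a l ih =>
    intro _
    rcases l with _ | ⟨b, t⟩
    · simp
    · rcases max_choice a ((b :: t).foldr max 0) with h | h
      · simp only [List.foldr_cons] at *; rw [h]; exact List.mem_cons_self
      · simp only [List.foldr_cons] at *; rw [h]
        exact List.mem_cons_of_mem _ (ih (by simp))

lemma foldr_max_le {w : List ℕ} {M} (h : ∀ x ∈ w, x ≤ M) : w.foldr max 0 ≤ M := by
  induction w with
  | nil => simp
  | cons a l ih =>
    simp only [List.foldr_cons, max_le_iff]
    exact ⟨h a (by simp), ih fun x hx => h x (List.mem_cons_of_mem _ hx)⟩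

lemma splitOn_two_le {m : ℕ} : ∀ {w : List ℕ}, m ∈ w → 2 ≤ (w.splitOn m).length := by
  intro w; induction w with
  | nil => simp
  | cons a l ih =>
    intro hm
    rw [List.splitOn, List.splitOnP_cons]
    by_cases h : a = m
    · simp only [h, beq_self_eq_true, if_pos]
      have := List.splitOnP_ne_nil (· == m) l
      have : 1 ≤ (l.splitOnP (· == m)).length := List.length_pos_iff.2 this
      simp only [List.length_cons]; omega
    · have hml : m ∈ l := by rcases List.mem_cons.1 hm with rfl | h' ; exact absurd rfl h; exact h'
      simp only [beq_iff_eq, h, if_false, List.length_modifyHead]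
      exact ih hml

lemma splitOn_piece {m : ℕ} : ∀ {w v : List ℕ}, v ∈ w.splitOn m →
    v.length ≤ w.length ∧ (m ∈ w → v.length < w.length) := by
  intro w; induction w with
  | nil =>
    intro v hv
    simp only [List.splitOn_nil, List.mem_singleton] at hv
    subst hv; simp
  | cons a l ih =>
    intro v hv
    rw [List.splitOn, List.splitOnP_cons] at hv
    by_cases h : a = m
    · simp only [h, beq_self_eq_true, if_pos, List.mem_cons] at hv
      rcases hv with rfl | hv
      · simp
      · have := (ih (v := v) hv).1
        constructor <;> simp <;> omega
    · simp only [beq_iff_eq, h, if_false] at hv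
      rcases hl : l.splitOnP (· == m) with _ | ⟨hd, tl⟩
      · exact absurd hl (List.splitOnP_ne_nil _ _)
      · rw [hl, List.modifyHead_cons, List.mem_cons] at hv
        rcases hv with rfl | hv
        · have h1 := (ih (v := hd) (by rw [List.splitOn, hl]; exact List.mem_cons_self))
          refine ⟨by simpa using h1.1, fun hm => ?_⟩
          have hml : m ∈ l := by rcases List.mem_cons.1 hm with rfl | h'; exact absurd rfl h; exact h'
          have := h1.2 hml
          simp only [List.length_cons]; omega
        · have h1 := ih (v := v) (by rw [List.splitOn, hl]; exact List.mem_cons_of_mem _ hv)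
          refine ⟨by simp; omega, fun _ => by simp; omega⟩

lemma treeOfAux_nil (n : ℕ) : treeOfAux n [] = .node [] := by cases n <;> rfl

lemma treeOfAux_eq : ∀ (k n m : ℕ) (w : List ℕ), w.length ≤ k → w.length ≤ n → w.length ≤ m →
    treeOfAux n w = treeOfAux m w := by
  intro k
  induction k with
  | zero =>
    intro n m w hk _ _
    have : w = [] := List.length_eq_zero_iff.1 (Nat.le_zero.1 hk)
    subst this; rw [treeOfAux_nil, treeOfAux_nil]
  | succ k ih =>
    intro n m w hk hn hm
    rcases w with _ | ⟨a, l⟩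
    · rw [treeOfAux_nil, treeOfAux_nil]
    · simp only [List.length_cons] at hk hn hm
      obtain ⟨n', rfl⟩ : ∃ n', n = n' + 1 := ⟨n - 1, by omega⟩
      obtain ⟨m', rfl⟩ : ∃ m', m = m' + 1 := ⟨m - 1, by omega⟩
      rw [treeOfAux, treeOfAux]
      congr 1
      apply List.map_congr_left
      intro v hv
      have hmem := foldr_max_mem (w := a :: l) (by simp)
      have hp := splitOn_piece hv
      have hlt := hp.2 hmem
      simp only [List.length_cons] at hlt
      exact ih n' m' v (by omega) (by omega) (by omega)

lemma treeOf_cons (a : ℕ) (l : List ℕ) :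
    treeOf (a :: l) = .node (((a :: l).splitOn ((a :: l).foldr max 0)).map treeOf) := by
  rw [treeOf, List.length_cons, treeOfAux]
  congr 1
  apply List.map_congr_left
  intro v hv
  have hmem := foldr_max_mem (w := a :: l) (by simp)
  have hlt := (splitOn_piece hv).2 hmem
  simp only [List.length_cons] at hlt
  exact treeOfAux_eq l.length _ _ v (by omega) (by omega) le_rfl

lemma forward : ∀ (k : ℕ) (w : List ℕ), w.length ≤ k →
    EveryInternalNodeHasAtLeastTwoChildren (treeOf w) := by
  intro k
  induction k with
  | zero =>
    intro w hk
    have : w = [] := List.length_eq_zero_iff.1 (Nat.le_zero.1 hk)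
    subst this
    exact .node [] (Or.inl rfl) (by simp)
  | succ k ih =>
    intro w hk
    rcases w with _ | ⟨a, l⟩
    · exact .node [] (Or.inl rfl) (by simp)
    · rw [treeOf_cons]
      have hmem := foldr_max_mem (w := a :: l) (by simp)
      refine .node _ (Or.inr ?_) ?_
      · rw [List.length_map]
        exact splitOn_two_le hmem
      · intro t ht
        rw [List.mem_map] at ht
        obtain ⟨v, hv, rfl⟩ := ht
        have hlt := (splitOn_piece hv).2 hmem
        simp only [List.length_cons] at hk hlt
        exact ih v (by omega)

lemma intercalate_cons₂ (s a : List ℕ) (b : List ℕ) (t : List (List ℕ)) :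
    s.intercalate (a :: b :: t) = a ++ s ++ s.intercalate (b :: t) := by
  simp [List.intercalate, List.intersperse]

lemma mem_intercalate_of_mem {s : List ℕ} {x : ℕ} :
    ∀ {ws : List (List ℕ)} {u}, u ∈ ws → x ∈ u → x ∈ s.intercalate ws := by
  intro ws
  induction ws with
  | nil => simp
  | cons a t ih =>
    intro u hu hx
    rcases t with _ | ⟨b, t'⟩
    · simp only [List.mem_singleton] at hu; subst hu
      simpa [List.intercalate] using hx
    · rw [intercalate_cons₂]
      rcases List.mem_cons.1 hu with rfl | hu
      · simp [hx]
      · simp only [List.mem_append]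
        exact Or.inr (ih hu hx)

lemma sep_mem_intercalate {s : List ℕ} {x : ℕ} (hx : x ∈ s) {ws : List (List ℕ)}
    (h : 2 ≤ ws.length) : x ∈ s.intercalate ws := by
  rcases ws with _ | ⟨a, _ | ⟨b, t⟩⟩ <;> simp at h
  rw [intercalate_cons₂]; simp [hx]

lemma mem_intercalate {s : List ℕ} {x : ℕ} :
    ∀ {ws : List (List ℕ)}, x ∈ s.intercalate ws → x ∈ s ∨ ∃ u ∈ ws, x ∈ u := by
  intro ws
  induction ws with
  | nil => simp [List.intercalate]
  | cons a t ih =>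
    intro hx
    rcases t with _ | ⟨b, t'⟩
    · simp only [List.intercalate, List.intersperse, List.flatten] at hx
      right; exact ⟨a, by simp, by simpa using hx⟩
    · rw [intercalate_cons₂] at hx
      simp only [List.mem_append] at hx
      rcases hx with (hx | hx) | hx
      · right; exact ⟨a, by simp, hx⟩
      · left; exact hx
      · rcases ih hx with h | ⟨u, hu, hxu⟩
        · left; exact h
        · right; exact ⟨u, List.mem_cons_of_mem _ hu, hxu⟩

lemma packed_of_Icc {w : List ℕ} {M : ℕ} (h : w.toFinset = Finset.Icc 1 M) :
    pack w = w := by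
  have key : ∀ x ∈ w, rank w x = x := by
    intro x hx
    have hxI : x ∈ Finset.Icc 1 M := h ▸ List.mem_toFinset.2 hx
    rw [Finset.mem_Icc] at hxI
    have h1 : ((w.filter (· < x)).dedup).length = (w.filter (· < x)).toFinset.card :=
      (List.card_toFinset _).symm
    have h2 := List.toFinset_filter w (fun y => decide (y < x))
    have h3 : (w.toFinset.filter fun y => decide (y < x) = true) = Finset.Icc 1 (x - 1) := by
      rw [h]; ext y
      simp only [Finset.mem_filter, Finset.mem_Icc, decide_eq_true_eq]
      omega
    rw [rank, h1, h2, h3, Nat.card_Icc]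
    omega
  rw [pack]
  conv_rhs => rw [← List.map_id w]
  exact List.map_congr_left key

lemma exists_word : ∀ t : PlaneTree, EveryInternalNodeHasAtLeastTwoChildren t →
    ∃ w : List ℕ, w.toFinset = Finset.Icc 1 (w.foldr max 0) ∧ treeOf w = t := by
  intro t h
  induction h with
  | node ts hlen hts ih =>
    rcases hlen with rfl | hlen
    · exact ⟨[], by simp, rfl⟩
    · set ws : List (List ℕ) := ts.pmap (fun t ht => (ih t ht).choose) (fun _ h => h) with hws
      have hlenws : ws.length = ts.length := List.length_pmap
      have hprop : ∀ u ∈ ws, u.toFinset = Finset.Icc 1 (u.foldr max 0) := by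
        intro u hu
        rw [hws, List.mem_pmap] at hu
        obtain ⟨t, ht, rfl⟩ := hu
        exact (ih t ht).choose_spec.1
      set M0 : ℕ := (ws.map (fun u => u.foldr max 0)).foldr max 0 with hM0
      set M : ℕ := M0 + 1 with hM
      have hbound : ∀ u ∈ ws, ∀ x ∈ u, x ≤ M0 := by
        intro u hu x hx
        exact le_trans (le_foldr_max hx)
          (le_foldr_max (List.mem_map_of_mem (f := fun u : List ℕ => u.foldr max 0) hu))
      have hMnot : ∀ u ∈ ws, M ∉ u := by
        intro u hu hMu
        have := hbound u hu M hMu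
        omega
      have hws2 : 2 ≤ ws.length := by omega
      have hwsne : ws ≠ [] := by
        intro h; rw [h] at hws2; simp at hws2
      set w : List ℕ := [M].intercalate ws with hw
      have hsplit : w.splitOn M = ws := List.splitOn_intercalate (ls := ws) M hMnot hwsne
      have hMw : M ∈ w := sep_mem_intercalate (by simp) hws2
      have hmax : w.foldr max 0 = M := by
        apply le_antisymm
        · apply foldr_max_le
          intro x hx
          rcases mem_intercalate hx with hx | ⟨u, hu, hxu⟩
          · simp only [List.mem_singleton] at hx; omega
          · have := hbound u hu x hxu; omega
        · exact le_foldr_max hMw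
      have htoF : w.toFinset = Finset.Icc 1 M := by
        ext y
        rw [List.mem_toFinset, Finset.mem_Icc]
        constructor
        · intro hy
          rcases mem_intercalate hy with hy | ⟨u, hu, hyu⟩
          · simp only [List.mem_singleton] at hy; omega
          · have h1 := hbound u hu y hyu
            have h2 : y ∈ u.toFinset := List.mem_toFinset.2 hyu
            rw [hprop u hu, Finset.mem_Icc] at h2
            omega
        · rintro ⟨h1, h2⟩
          by_cases hy : y = M
          · subst hy; exact hMw
          · have hy0 : y ≤ M0 := by omega
            have : M0 ∈ ws.map (fun u => u.foldr max 0) :=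
              foldr_max_mem (by simp [hwsne])
            rw [List.mem_map] at this
            obtain ⟨u, hu, hMu⟩ := this
            have : y ∈ u.toFinset := by
              rw [hprop u hu, Finset.mem_Icc, hMu]
              omega
            exact mem_intercalate_of_mem hu (List.mem_toFinset.1 this)
      refine ⟨w, by rw [hmax]; exact htoF, ?_⟩
      rcases hwe : w with _ | ⟨a, l⟩
      · rw [hwe] at hMw; simp at hMw
      · rw [← hwe, hwe, treeOf_cons, ← hwe, hmax, hsplit]
        congr 1
        rw [hws, List.map_pmap]
        have : ∀ t (ht : t ∈ ts), treeOf (ih t ht).choose = t := fun t ht =>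
          (ih t ht).choose_spec.2
        calc ts.pmap (fun t ht => treeOf (ih t ht).choose) (fun _ h => h)
            = ts.pmap (fun t _ => t) (fun _ h => h) := by
              apply List.pmap_congr_left
              intro t ht _ _
              exact this t ht
          _ = ts := by rw [List.pmap_eq_map]; simp

end TreeOfProof

/-- Every internal node of the plane tree `𝒯(w)` of a word `w` over the positive
integers has at least two children; conversely, every plane tree all of whose internal
nodes have at least two children is of the form `𝒯(w)` for some word `w`, which may be
taken to be a packed word. -/
theorem treeOf_internal_nodes :
    (∀ w : List ℕ, (∀ x ∈ w, 0 < x) →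
        EveryInternalNodeHasAtLeastTwoChildren (treeOf w)) ∧
    (∀ t : PlaneTree, EveryInternalNodeHasAtLeastTwoChildren t →
        ∃ w : List ℕ, pack w = w ∧ treeOf w = t) := by
  constructor
  · intro w _
    exact TreeOfProof.forward w.length w le_rfl
  · intro t ht
    obtain ⟨w, hF, hT⟩ := TreeOfProof.exists_word t ht
    exact ⟨w, TreeOfProof.packed_of_Icc hF, hT⟩
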